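/- For α̃ ∈ Φ̃ set Z_{α̃} := X_{α̃} + X_{wα̃} + ... + X_{w^{d−1}α̃} ∈ 𝔥. Then for all α̃, β̃ ∈ Φ̃: [Z_{α̃}, Z_{β̃}] = Σ_{j ∈ I_{α,β}(−1)} ε_w(w^jα, β) · Z_{(w^jα̃)β̃}, where I_{α,β}(−1) := {j ∈ {0, ..., d−1} | (w^jα, β) = −1} (note that for j ∈ I_{α,β}(−1) one has w^jα + β ∈ Φ, so (w^jα̃)β̃ ∈ Φ̃). -/

import Mathlib

noncomputable section

private lemma sum_shift_periodic {M : Type*} [AddCommGroup M] (d : ℕ) (p : ℕ → M)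
    (hp : ∀ i, p (i + d) = p i) (j : ℕ) :
    ∑ i ∈ Finset.range d, p (i + j) = ∑ i ∈ Finset.range d, p i := by
  induction j with
  | zero => simp
  | succ j ih =>
    have e1 := Finset.sum_range_succ (fun i => p (i + j)) d
    have e2 := Finset.sum_range_succ' (fun i => p (i + j)) d
    have e3 : p (d + j) = p j := by
      rw [Nat.add_comm]; exact hp j
    have e4 : ∀ i, p (i + (j + 1)) = p (i + 1 + j) := by
      intro i; congr 1; omega
    calc ∑ i ∈ Finset.range d, p (i + (j + 1))
        = ∑ i ∈ Finset.range d, p (i + 1 + j) := Finset.sum_congr rfl fun i _ => e4 i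
      _ = ∑ i ∈ Finset.range d, p (i + j) := by
          have : (∑ i ∈ Finset.range d, p (i + 1 + j)) + p (0 + j)
              = (∑ i ∈ Finset.range d, p (i + j)) + p (d + j) := by
            rw [← e2, ← e1]
          simp only [Nat.zero_add] at this
          rw [e3] at this
          exact add_right_cancel this
      _ = ∑ i ∈ Finset.range d, p i := ih


/-- The coroot `α∨ ∈ Hom(Λ, k)`, `α∨(β) = (α, β)`. -/
def corootHom (k : Type*) [Field k] {Λ : Type*} [AddCommGroup Λ]
    (B : Λ →+ Λ →+ ℤ) (α : Λ) : Λ →+ k :=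
  (Int.castAddHom k).comp (B α)

/-- The subgroup `(1-w)Λ` of a lattice `Λ` with automorphism `w`. -/
def coinvSub {Λ : Type*} [AddCommGroup Λ] (w : AddAut Λ) : AddSubgroup Λ :=
  AddSubgroup.closure {y | ∃ x : Λ, y = x - w x}

/-- The pairing `ε_w(α,β) = ∏_{j=1}^{d-1} (1 - ζ^{-j})^{(w^jα,β)}`. -/
def epsw {k : Type*} [Field k] {Λ : Type*} [AddCommGroup Λ] (d : ℕ) (ζ : k)
    (B : Λ →+ Λ →+ ℤ) (w : AddAut Λ) (α β : Λ) : k :=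
  ∏ j ∈ Finset.Ico 1 d, (1 - ζ ^ (-(j : ℤ))) ^ (B ((j • w) α) β)

/-- The exponent `∑_{j=1}^{d-1} j·(w^jα, β)`, so that `⟨α,β⟩_w = ζ ^ commExpW d B w α β`. -/
def commExpW {Λ : Type*} [AddCommGroup Λ] (d : ℕ) (B : Λ →+ Λ →+ ℤ) (w : AddAut Λ)
    (α β : Λ) : ℤ :=
  ∑ j ∈ Finset.Ico 1 d, (j : ℤ) * B ((j • w) α) β

/-- `Z_{α̃} = X_{α̃} + X_{wα̃} + ... + X_{w^{d-1}α̃}`. -/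
def Zsum {Lt H : Type*} [Monoid Lt] [AddCommMonoid H] (d : ℕ) (wt : MulAut Lt)
    (X : Lt → H) (a : Lt) : H :=
  ∑ j ∈ Finset.range d, X ((wt ^ j) a)

/-- **Lemma 4.3.** For `Z_α̃ = ∑_j X_{w^jα̃}` one has
`[Z_α̃, Z_β̃] = ∑_{j ∈ I_{α,β}(-1)} ε_w(w^jα, β) Z_{(w^jα̃)β̃}`. -/
theorem bracket_of_Z_elements
    (k : Type*) [Field k] [CharZero k]
    (d : ℕ) (hd : 0 < d) (ζ : k) (hζ : IsPrimitiveRoot ζ d)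
    -- the simply laced root lattice Λ with elliptic automorphism w of order d
    (Λ : Type*) [AddCommGroup Λ] [Module.Free ℤ Λ] [Module.Finite ℤ Λ]
    (B : Λ →+ Λ →+ ℤ)
    (hBsymm : ∀ a b : Λ, B a b = B b a)
    (hBpos : ∀ a : Λ, a ≠ 0 → 0 < B a a)
    (hBgen : AddSubgroup.closure {a : Λ | B a a = 2} = ⊤)
    (w : AddAut Λ) (hwB : ∀ a b : Λ, B (w a) (w b) = B a b)
    (hword : addOrderOf w = d)
    (hell : Finite (Λ ⧸ coinvSub w))
    -- the central extension Λ̃ of Λ by ⟨ζ⟩ (pulled back from ℋ over the coinvariants)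
    (Lt : Type*) [Group Lt]
    (z : Lt) (hzc : z ∈ Subgroup.center Lt) (hzord : orderOf z = d)
    (pr : Lt → Λ) (hpr : ∀ a b : Lt, pr (a * b) = pr a + pr b)
    (hprs : Function.Surjective pr)
    (hker : ∀ a : Lt, pr a = 0 ↔ ∃ i : ℤ, a = z ^ i)
    (hfac : ∀ a b c : Lt, pr a - pr b ∈ coinvSub w →
      a * c * a⁻¹ * c⁻¹ = b * c * b⁻¹ * c⁻¹)
    -- the commutator pairing of Λ̃ is ⟨·,·⟩_w (Lepowsky--Reeder pairing)
    (hcomm : ∀ a b : Lt, a * b * a⁻¹ * b⁻¹ = z ^ (commExpW d B w (pr a) (pr b)))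
    -- the underlying vector space 𝔥 = 𝔱 ⊕ 𝔩
    (H : Type*) [AddCommGroup H] [Module k H]
    (tEmb : (Λ →+ k) →ₗ[k] H) (htinj : Function.Injective tEmb)
    (X : Lt → H)
    (hXζ : ∀ a : Lt, B (pr a) (pr a) = 2 → X (z * a) = ζ • X a)
    (sec : Λ → Lt) (hsec : ∀ α : Λ, pr (sec α) = α)
    (hXind : LinearIndependent k (fun α : {α : Λ // B α α = 2} => X (sec α)))
    (hspan : Submodule.span k
      (Set.range ⇑tEmb ∪ X '' {a : Lt | B (pr a) (pr a) = 2}) = ⊤)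
    (hdisj : Disjoint (LinearMap.range tEmb)
      (Submodule.span k (X '' {a : Lt | B (pr a) (pr a) = 2})))
    -- the bracket of the construction
    (br : H →ₗ[k] H →ₗ[k] H)
    (hbr_tt : ∀ f g : Λ →+ k, br (tEmb f) (tEmb g) = 0)
    (hbr_tX : ∀ (α : Λ) (a : Lt), B α α = 2 → B (pr a) (pr a) = 2 →
      br (tEmb (corootHom k B α)) (X a) = ((B α (pr a) : k)) • X a)
    (hbr_Xt : ∀ (α : Λ) (a : Lt), B α α = 2 → B (pr a) (pr a) = 2 →
      br (X a) (tEmb (corootHom k B α)) = (-(B α (pr a) : k)) • X a)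
    (hbr_XX₀ : ∀ a b : Lt, B (pr a) (pr a) = 2 → B (pr b) (pr b) = 2 →
      pr a + pr b = 0 → ∀ i : ℤ, a * b = z ^ i →
      br (X a) (X b) = ((epsw d ζ B w (pr a) (pr b)) * ζ ^ i) • tEmb (corootHom k B (pr a)))
    (hbr_XXΦ : ∀ a b : Lt, B (pr a) (pr a) = 2 → B (pr b) (pr b) = 2 →
      B (pr a + pr b) (pr a + pr b) = 2 →
      br (X a) (X b) = (epsw d ζ B w (pr a) (pr b)) • X (a * b))
    (hbr_XXo : ∀ a b : Lt, B (pr a) (pr a) = 2 → B (pr b) (pr b) = 2 →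
      pr a + pr b ≠ 0 → B (pr a + pr b) (pr a + pr b) ≠ 2 →
      br (X a) (X b) = 0)
    -- the lift of w to Λ̃ (acting as w on Λ and trivially on ℋ)
    (wt : MulAut Lt) (hwtpr : ∀ a : Lt, pr (wt a) = w (pr a))
    (hwtz : wt z = z) (hwtd : wt ^ d = 1)
    :
    ∀ a b : Lt, B (pr a) (pr a) = 2 → B (pr b) (pr b) = 2 →
      br (Zsum d wt X a) (Zsum d wt X b) =
        ∑ j ∈ (Finset.range d).filter (fun j => B ((j • w) (pr a)) (pr b) = -1),
          epsw d ζ B w ((j • w) (pr a)) (pr b) • Zsum d wt X ((wt ^ j) a * b) := by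
  intro a b ha hb
  -- basic power facts
  have hwd : d • w = 0 := by rw [← hword]; exact addOrderOf_nsmul_eq_zero w
  have hwpow : ∀ (n : ℕ) (x y : Λ), B ((n • w) x) ((n • w) y) = B x y := by
    intro n
    induction n with
    | zero => intro x y; simp
    | succ n ih =>
      intro x y
      rw [succ_nsmul', AddAut.add_apply, AddAut.add_apply, hwB]
      exact ih x y
  have heps1 : ∀ x y : Λ, epsw d ζ B w (w x) (w y) = epsw d ζ B w x y := by
    intro x y
    unfold epsw
    refine Finset.prod_congr rfl fun j _ => ?_
    congr 1
    have h1 : (j • w) (w x) = w ((j • w) x) := by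
      rw [← AddAut.add_apply, ← succ_nsmul, succ_nsmul', AddAut.add_apply]
    rw [h1, hwB]
  have hepspow : ∀ (n : ℕ) (x y : Λ),
      epsw d ζ B w ((n • w) x) ((n • w) y) = epsw d ζ B w x y := by
    intro n
    induction n with
    | zero => intro x y; simp
    | succ n ih =>
      intro x y
      rw [succ_nsmul', AddAut.add_apply, AddAut.add_apply, heps1]
      exact ih x y
  have hprw : ∀ (n : ℕ) (c : Lt), pr ((wt ^ n) c) = (n • w) (pr c) := by
    intro n
    induction n with
    | zero => intro c; simp
    | succ n ih =>
      intro c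
      rw [pow_succ', MulAut.mul_apply, hwtpr, ih, succ_nsmul', AddAut.add_apply]
  have hwtzn : ∀ n : ℕ, (wt ^ n) z = z := by
    intro n
    induction n with
    | zero => simp
    | succ n ih => rw [pow_succ', MulAut.mul_apply, ih, hwtz]
  -- expansion of B on sums
  have expand : ∀ u v : Λ, B (u + v) (u + v) = B u u + B u v + (B v u + B v v) := by
    intro u v
    simp only [map_add, AddMonoidHom.add_apply]
    ring
  -- ellipticity: ∑_j B (w^j γ) x = 0
  have hsumB : ∀ γ x : Λ, ∑ j ∈ Finset.range d, B ((j • w) γ) x = 0 := by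
    intro γ x
    set F : Λ →+ ℤ := ∑ j ∈ Finset.range d, B ((j • w) γ) with hF
    have hFapp : ∀ y, F y = ∑ j ∈ Finset.range d, B ((j • w) γ) y := by
      intro y; rw [hF]; exact AddMonoidHom.finset_sum_apply _ _ _
    have hFw : ∀ y, F (w y) = F y := by
      intro y
      rw [hFapp, hFapp]
      have key : ∀ j : ℕ, B (((j + 1) • w) γ) (w y) = B ((j • w) γ) y := by
        intro j
        rw [succ_nsmul', AddAut.add_apply, hwB]
      have e1 := Finset.sum_range_succ (fun j => B ((j • w) γ) (w y)) d
      have e2 := Finset.sum_range_succ' (fun j => B ((j • w) γ) (w y)) d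
      have e3 : B ((d • w) γ) (w y) = B ((0 • w) γ) (w y) := by rw [hwd, zero_nsmul]
      have e4 : ∑ j ∈ Finset.range d, B (((j + 1) • w) γ) (w y)
          = ∑ j ∈ Finset.range d, B ((j • w) γ) y :=
        Finset.sum_congr rfl fun j _ => key j
      omega
    have hFcoinv : ∀ y ∈ coinvSub w, F y = 0 := by
      intro y hy
      unfold coinvSub at hy
      induction hy using AddSubgroup.closure_induction with
      | mem u hu =>
        obtain ⟨x', rfl⟩ := hu
        rw [map_sub, hFw, sub_self]
      | zero => exact map_zero F
      | add u v _ _ hu hv => rw [map_add, hu, hv, add_zero]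
      | neg u _ hu => rw [map_neg, hu, neg_zero]
    -- finite quotient
    obtain ⟨n, hn, hnq⟩ := isOfFinAddOrder_iff_nsmul_eq_zero.mp
      (isOfFinAddOrder_of_finite (QuotientAddGroup.mk x : Λ ⧸ coinvSub w))
    have hmem : n • x ∈ coinvSub w := by
      apply (QuotientAddGroup.eq_zero_iff _).mp
      rw [← hnq]
      rfl
    have h0 : (n : ℤ) * F x = 0 := by
      have := hFcoinv _ hmem
      rw [map_nsmul] at this
      rw [← this]
      simp [nsmul_eq_mul]
    have : F x = 0 := by
      rcases mul_eq_zero.mp h0 with h | h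
      · exfalso; have hn0 : n = 0 := by exact_mod_cast h
        omega
      · exact h
    rw [← hFapp]
    exact this
  -- the per-shift inner sum
  have key : ∀ s : ℕ,
      (∑ j ∈ Finset.range d, br (X ((wt ^ (s + j)) a)) (X ((wt ^ j) b))) =
      (if B ((s • w) (pr a)) (pr b) = -1 then
        epsw d ζ B w ((s • w) (pr a)) (pr b) • Zsum d wt X ((wt ^ s) a * b) else 0) := by
    intro s
    have haj : ∀ j : ℕ, B (pr ((wt ^ (s + j)) a)) (pr ((wt ^ (s + j)) a)) = 2 := by
      intro j; rw [hprw, hwpow]; exact ha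
    have hbj : ∀ j : ℕ, B (pr ((wt ^ j) b)) (pr ((wt ^ j) b)) = 2 := by
      intro j; rw [hprw, hwpow]; exact hb
    have hsplit : ∀ j : ℕ, ((s + j) • w) (pr a) = (j • w) ((s • w) (pr a)) := by
      intro j; rw [add_comm, add_nsmul, AddAut.add_apply]
    have hwtsplit : ∀ j : ℕ, (wt ^ (s + j)) a = (wt ^ j) ((wt ^ s) a) := by
      intro j; rw [add_comm, pow_add, MulAut.mul_apply]
    have hcross : ∀ j : ℕ, B (((s + j) • w) (pr a)) ((j • w) (pr b))
        = B ((s • w) (pr a)) (pr b) := by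
      intro j; rw [hsplit, hwpow]
    have hsum' : ∀ j : ℕ, ((s + j) • w) (pr a) + (j • w) (pr b)
        = (j • w) ((s • w) (pr a) + pr b) := by
      intro j; rw [map_add, hsplit]
    have hN : ∀ j : ℕ, B (((s + j) • w) (pr a) + (j • w) (pr b))
        (((s + j) • w) (pr a) + (j • w) (pr b))
        = 4 + 2 * B ((s • w) (pr a)) (pr b) := by
      intro j
      rw [hsum' j, hwpow, expand, hwpow]
      have h1 : B (pr b) ((s • w) (pr a)) = B ((s • w) (pr a)) (pr b) := hBsymm _ _
      omega
    have hepsj : ∀ j : ℕ, epsw d ζ B w (((s + j) • w) (pr a)) ((j • w) (pr b))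
        = epsw d ζ B w ((s • w) (pr a)) (pr b) := by
      intro j; rw [hsplit, hepspow]
    by_cases hc1 : B ((s • w) (pr a)) (pr b) = -1
    · rw [if_pos hc1]
      have hterm : ∀ j ∈ Finset.range d, br (X ((wt ^ (s + j)) a)) (X ((wt ^ j) b))
          = epsw d ζ B w ((s • w) (pr a)) (pr b) • X ((wt ^ j) ((wt ^ s) a * b)) := by
        intro j _
        rw [hbr_XXΦ _ _ (haj j) (hbj j) (by rw [hprw, hprw, hN j]; omega)]
        rw [hprw, hprw, hepsj j]
        congr 1
        rw [map_mul, hwtsplit]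
      rw [Finset.sum_congr rfl hterm, ← Finset.smul_sum]
      rfl
    · by_cases hc2 : B ((s • w) (pr a)) (pr b) = -2
      · rw [if_neg hc1]
        have hδ : (s • w) (pr a) + pr b = 0 := by
          by_contra hne
          have hpos := hBpos _ hne
          have := expand ((s • w) (pr a)) (pr b)
          rw [hwpow] at this
          have h1 : B (pr b) ((s • w) (pr a)) = B ((s • w) (pr a)) (pr b) := hBsymm _ _
          omega
        obtain ⟨i₀, hi₀⟩ := (hker ((wt ^ s) a * b)).mp (by rw [hpr, hprw]; exact hδ)
        have hterm : ∀ j ∈ Finset.range d, br (X ((wt ^ (s + j)) a)) (X ((wt ^ j) b))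
            = (epsw d ζ B w ((s • w) (pr a)) (pr b) * ζ ^ i₀) •
              tEmb (corootHom k B (((s + j) • w) (pr a))) := by
          intro j _
          have hz : (wt ^ (s + j)) a * (wt ^ j) b = z ^ i₀ := by
            rw [hwtsplit, ← map_mul, hi₀, map_zpow, hwtzn]
          have h0 : pr ((wt ^ (s + j)) a) + pr ((wt ^ j) b) = 0 := by
            rw [hprw, hprw, hsum' j, hδ, map_zero]
          rw [hbr_XX₀ _ _ (haj j) (hbj j) h0 i₀ hz, hprw, hprw, hepsj j]
        rw [Finset.sum_congr rfl hterm, ← Finset.smul_sum, ← map_sum]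
        have hcor : (∑ j ∈ Finset.range d, corootHom k B (((s + j) • w) (pr a)))
            = (0 : Λ →+ k) := by
          ext x
          rw [AddMonoidHom.finset_sum_apply]
          have h1 : ∀ j : ℕ, (corootHom k B (((s + j) • w) (pr a))) x
              = ((B ((j • w) ((s • w) (pr a))) x : ℤ) : k) := by
            intro j
            rw [hsplit]
            rfl
          rw [Finset.sum_congr rfl fun j _ => h1 j, ← Int.cast_sum, hsumB]
          simp
        rw [hcor, map_zero, smul_zero]
      · rw [if_neg hc1]
        apply Finset.sum_eq_zero
        intro j _
        apply hbr_XXo _ _ (haj j) (hbj j)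
        · rw [hprw, hprw]
          intro h0
          have := hN j
          rw [h0, map_zero] at this
          omega
        · rw [hprw, hprw, hN j]
          omega
  -- assemble
  calc br (Zsum d wt X a) (Zsum d wt X b)
      = ∑ i ∈ Finset.range d, ∑ j ∈ Finset.range d,
          br (X ((wt ^ i) a)) (X ((wt ^ j) b)) := by
        unfold Zsum
        rw [map_sum br (fun i => X ((wt ^ i) a)) (Finset.range d), LinearMap.sum_apply]
        exact Finset.sum_congr rfl fun i _ => map_sum _ _ _
    _ = ∑ j ∈ Finset.range d, ∑ i ∈ Finset.range d,
          br (X ((wt ^ i) a)) (X ((wt ^ j) b)) := Finset.sum_comm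
    _ = ∑ j ∈ Finset.range d, ∑ s ∈ Finset.range d,
          br (X ((wt ^ (s + j)) a)) (X ((wt ^ j) b)) := by
        refine Finset.sum_congr rfl fun j _ => ?_
        exact (sum_shift_periodic d (fun i => br (X ((wt ^ i) a)) (X ((wt ^ j) b)))
          (fun i => by simp [pow_add, hwtd]) j).symm
    _ = ∑ s ∈ Finset.range d, ∑ j ∈ Finset.range d,
          br (X ((wt ^ (s + j)) a)) (X ((wt ^ j) b)) := Finset.sum_comm
    _ = ∑ s ∈ Finset.range d,
          (if B ((s • w) (pr a)) (pr b) = -1 then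
            epsw d ζ B w ((s • w) (pr a)) (pr b) • Zsum d wt X ((wt ^ s) a * b) else 0) :=
        Finset.sum_congr rfl fun s _ => key s
    _ = _ := (Finset.sum_filter _ _).symm

end
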